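/- Let T̃ : ℝ² → ℝ be continuously differentiable with compact support, let φ : ℝ² → ℝ be twice continuously differentiable with bounded gradient ∇φ, and fix k, l ∈ ℝ². For z ∈ ℂ define the real-valued perturbation φ_z(x) = z e^{i x·l} + conj(z) e^{−i x·l}, and define G : ℂ → ℂ by G(z) = (2π)⁻¹ ∫_{ℝ²} e^{−i k·x} T̃(x − ∇φ(x) − ∇φ_z(x)) dx. Define A^q(x) = (∂T̃/∂x_q)(x − ∇φ(x)) for q = 1, 2. Then the Wirtinger-type derivative (∂/∂(re z) + i ∂/∂(im z)) G evaluated at z = 0 equals 2 Σ_{q=1,2} i l_q Â^q(k+l), where Â^q is the Fourier transform of A^q. -/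

import Mathlib

open MeasureTheory Metric
open scoped RealInnerProductSpace

noncomputable section

/-- `ℝ²` as a Euclidean (inner product) space. -/
abbrev E2 := EuclideanSpace ℝ (Fin 2)

/-- The Fourier transform with the paper's normalization:
`f̂(l) = (2π)⁻¹ ∫ e^{-i x·l} f(x) dx`. -/
noncomputable def ft (f : E2 → ℂ) (l : E2) : ℂ :=
  (2 * Real.pi)⁻¹ • ∫ x : E2, Complex.exp (-(Complex.I * (⟪x, l⟫ : ℂ))) * f x

/-- Fourier transform of a real-valued function. -/
noncomputable def ftR (f : E2 → ℝ) (l : E2) : ℂ := ft (fun x => (f x : ℂ)) l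

/-- The `q`-th partial derivative of `f : ℝ² → ℝ`. -/
noncomputable def pderiv2 (q : Fin 2) (f : E2 → ℝ) (x : E2) : ℝ :=
  fderiv ℝ f x (EuclideanSpace.single q 1)

/-- The anti-lensed gradient field `A^q(x) = (∂T/∂x_q)(x - ∇φ(x))`. -/
noncomputable def Aq (T φ : E2 → ℝ) (q : Fin 2) (x : E2) : ℝ :=
  pderiv2 q T (x - gradient φ x)

/-- The real-valued perturbation `φ_z(x) = z e^{i x·l} + conj(z) e^{-i x·l}`. -/
noncomputable def pert (l : E2) (z : ℂ) (x : E2) : ℝ :=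
  (z * Complex.exp (Complex.I * (⟪x, l⟫ : ℂ)) +
    (starRingEnd ℂ) z * Complex.exp (-(Complex.I * (⟪x, l⟫ : ℂ)))).re

/-- The perturbed anti-lensed Fourier coefficient
`G(z) = (2π)⁻¹ ∫ e^{-i k·x} T̃(x - ∇φ(x) - ∇φ_z(x)) dx`. -/
noncomputable def Gfun (T φ : E2 → ℝ) (k l : E2) (z : ℂ) : ℂ :=
  (2 * Real.pi)⁻¹ • ∫ x : E2,
    Complex.exp (-(Complex.I * (⟪x, k⟫ : ℂ))) *
      ((T (x - gradient φ x - gradient (pert l z) x) : ℝ) : ℂ)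

lemma pert_eq (l : E2) (z : ℂ) (x : E2) :
    pert l z x = 2*(z.re * Real.cos ⟪x,l⟫ - z.im * Real.sin ⟪x,l⟫) := by
  unfold pert
  have h1 : Complex.I * ((⟪x,l⟫:ℝ):ℂ) = ((⟪x,l⟫:ℝ):ℂ) * Complex.I := mul_comm _ _
  have h2 : -(((⟪x,l⟫:ℝ):ℂ) * Complex.I) = (starRingEnd ℂ) (((⟪x,l⟫:ℝ):ℂ) * Complex.I) := by
    simp [Complex.conj_ofReal]
  rw [h1, h2, Complex.exp_conj, ← map_mul, Complex.add_conj]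
  rw [Complex.ofReal_re, Complex.mul_re, Complex.exp_ofReal_mul_I_re,
    Complex.exp_ofReal_mul_I_im]

lemma hasFDerivAt_inner_right (l x : E2) :
    HasFDerivAt (fun y : E2 => (⟪y, l⟫ : ℝ)) (innerSL ℝ l) x := by
  have : (fun y : E2 => (⟪y, l⟫ : ℝ)) = fun y => innerSL ℝ l y := by
    funext y; simp [real_inner_comm]
  rw [this]
  exact (innerSL ℝ l).hasFDerivAt

lemma hasGradientAt_pert (l : E2) (z : ℂ) (x : E2) :
    HasGradientAt (pert l z)
      ((-2*(z.re * Real.sin ⟪x,l⟫ + z.im * Real.cos ⟪x,l⟫)) • l) x := by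
  rw [hasGradientAt_iff_hasFDerivAt]
  have heq : pert l z = fun y => 2*(z.re * Real.cos ⟪y,l⟫ - z.im * Real.sin ⟪y,l⟫) := by
    funext y; exact pert_eq l z y
  rw [heq]
  have hc : HasFDerivAt (fun y : E2 => Real.cos ⟪y,l⟫)
      ((-Real.sin ⟪x,l⟫) • innerSL ℝ l) x :=
    (Real.hasDerivAt_cos _).comp_hasFDerivAt x (hasFDerivAt_inner_right l x)
  have hs : HasFDerivAt (fun y : E2 => Real.sin ⟪y,l⟫)
      ((Real.cos ⟪x,l⟫) • innerSL ℝ l) x :=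
    (Real.hasDerivAt_sin _).comp_hasFDerivAt x (hasFDerivAt_inner_right l x)
  have h := ((hc.const_mul (2*z.re)).sub (hs.const_mul (2*z.im)))
  have harr : (fun y : E2 => 2*z.re * Real.cos ⟪y,l⟫ - 2*z.im * Real.sin ⟪y,l⟫)
      = fun y => 2*(z.re * Real.cos ⟪y,l⟫ - z.im * Real.sin ⟪y,l⟫) := by
    funext y; ring
  rw [show ((fun y : E2 => 2*z.re * Real.cos ⟪y,l⟫) - fun y => 2*z.im * Real.sin ⟪y,l⟫) = fun y => 2*(z.re * Real.cos ⟪y,l⟫ - z.im * Real.sin ⟪y,l⟫) from harr] at h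
  refine h.congr_fderiv ?_
  ext y
  simp [InnerProductSpace.toDual_apply_apply, inner_smul_left, real_inner_comm x,
    ContinuousLinearMap.smul_apply, real_inner_smul_left]
  ring

lemma gradient_pert (l : E2) (z : ℂ) (x : E2) :
    gradient (pert l z) x
      = (-2*(z.re * Real.sin ⟪x,l⟫ + z.im * Real.cos ⟪x,l⟫)) • l :=
  (hasGradientAt_pert l z x).gradient

lemma gradient_pert_re (l : E2) (t : ℝ) (x : E2) :
    gradient (pert l ((t:ℂ))) x = (t * (-2 * Real.sin ⟪x,l⟫)) • l := by
  rw [gradient_pert]; norm_num; ring_nf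

lemma gradient_pert_im (l : E2) (t : ℝ) (x : E2) :
    gradient (pert l ((t:ℂ) * Complex.I)) x = (t * (-2 * Real.cos ⟪x,l⟫)) • l := by
  rw [gradient_pert]; norm_num; ring_nf

lemma continuous_gradient (φ : E2 → ℝ) (hφ : ContDiff ℝ 2 φ) :
    Continuous (fun x => gradient φ x) := by
  have : (fun x => gradient φ x)
      = fun x => (InnerProductSpace.toDual ℝ E2).symm (fderiv ℝ φ x) := rfl
  rw [this]
  exact (InnerProductSpace.toDual ℝ E2).symm.continuous.comp
    (hφ.continuous_fderiv two_ne_zero)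

lemma key_deriv (T : E2 → ℝ) (hT : ContDiff ℝ 1 T) (hTc : HasCompactSupport T)
    (φ : E2 → ℝ) (hφ : ContDiff ℝ 2 φ) (Mφ : ℝ) (hbφ : ∀ x, ‖gradient φ x‖ ≤ Mφ)
    (k l : E2) (g : E2 → ℝ) (hgc : Continuous g) (hg2 : ∀ x, |g x| ≤ 2) :
    Integrable (fun x : E2 => Complex.exp (-(Complex.I * (⟪x,k⟫:ℂ))) *
        (((-(g x) * (fderiv ℝ T (x - gradient φ x) l) : ℝ) : ℂ))) ∧
    HasDerivAt
      (fun t : ℝ => ∫ x : E2, Complex.exp (-(Complex.I * (⟪x,k⟫:ℂ))) *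
        (((T (x - gradient φ x - (t * g x) • l) : ℝ) : ℂ)))
      (∫ x : E2, Complex.exp (-(Complex.I * (⟪x,k⟫:ℂ))) *
        (((-(g x) * (fderiv ℝ T (x - gradient φ x) l) : ℝ) : ℂ))) 0 := by
  have hMφ : 0 ≤ Mφ := le_trans (norm_nonneg _) (hbφ 0)
  have hgrad : Continuous (gradient φ) :=
    (InnerProductSpace.toDual ℝ E2).symm.continuous.comp (hφ.continuous_fderiv two_ne_zero)
  have hp : Continuous (fun x : E2 => x - gradient φ x) := continuous_id.sub hgrad
  have hTcont : Continuous T := hT.continuous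
  have hT' : Continuous (fderiv ℝ T) := hT.continuous_fderiv one_ne_zero
  obtain ⟨C, hC⟩ := hT'.bounded_above_of_compact_support (hTc.fderiv ℝ)
  obtain ⟨R, hR⟩ := hTc.isBounded.subset_closedBall (0 : E2)
  set S : ℝ := max R 0 + Mφ + 2 * ‖l‖ with hS
  set e : E2 → ℂ := fun x => Complex.exp (-(Complex.I * (⟪x,k⟫:ℂ))) with he
  have hecont : Continuous e := by
    apply Complex.continuous_exp.comp
    apply Continuous.neg
    exact continuous_const.mul (Complex.continuous_ofReal.comp
      (continuous_id.inner continuous_const))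
  have henorm : ∀ x, ‖e x‖ = 1 := by
    intro x
    rw [he]
    simp [Complex.norm_exp]
  -- points far out map outside the support
  have hout : ∀ t : ℝ, |t| ≤ 1 → ∀ x : E2, S < ‖x‖ →
      (x - gradient φ x - (t * g x) • l) ∉ tsupport T := by
    intro t ht x hx hmem
    have h1 : ‖x - gradient φ x - (t * g x) • l‖ ≤ max R 0 :=
      le_trans (mem_closedBall_zero_iff.1 (hR hmem)) (le_max_left _ _)
    have h3 : ‖(t * g x) • l‖ ≤ 2 * ‖l‖ := by
      rw [norm_smul, Real.norm_eq_abs]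
      have habs : |t * g x| ≤ 2 := by
        rw [abs_mul]
        calc |t| * |g x| ≤ 1 * 2 :=
              mul_le_mul ht (hg2 x) (abs_nonneg _) zero_le_one
          _ = 2 := by ring
      exact mul_le_mul_of_nonneg_right habs (norm_nonneg _)
    have h2 : ‖x‖ ≤ ‖x - gradient φ x - (t * g x) • l‖ + Mφ + 2 * ‖l‖ := by
      calc ‖x‖ = ‖(x - gradient φ x - (t * g x) • l) + gradient φ x + (t * g x) • l‖ := by
            congr 1; abel
        _ ≤ ‖(x - gradient φ x - (t * g x) • l) + gradient φ x‖ + ‖(t * g x) • l‖ :=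
            norm_add_le _ _
        _ ≤ ‖x - gradient φ x - (t * g x) • l‖ + ‖gradient φ x‖ + ‖(t * g x) • l‖ := by
            gcongr; exact norm_add_le _ _
        _ ≤ ‖x - gradient φ x - (t * g x) • l‖ + Mφ + 2 * ‖l‖ := by
            gcongr
            all_goals first | exact hbφ x | exact h3 | skip
    have hcon : ‖x‖ ≤ S := by rw [hS]; linarith
    linarith
  set F : ℝ → E2 → ℂ := fun t x =>
    e x * ((T (x - gradient φ x - (t * g x) • l) : ℝ) : ℂ) with hF
  set F' : ℝ → E2 → ℂ := fun t x =>
    e x * (((fderiv ℝ T (x - gradient φ x - (t * g x) • l)) ((-(g x)) • l) : ℝ) : ℂ) with hF'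
  have hargc : ∀ t : ℝ, Continuous fun x : E2 => x - gradient φ x - (t * g x) • l := by
    intro t
    exact hp.sub ((continuous_const.mul hgc).smul continuous_const)
  have hFcont : ∀ t, Continuous (F t) := by
    intro t
    exact hecont.mul (Complex.continuous_ofReal.comp (hTcont.comp (hargc t)))
  have hF'cont : ∀ t, Continuous (F' t) := by
    intro t
    apply hecont.mul
    apply Complex.continuous_ofReal.comp
    exact isBoundedBilinearMap_apply.continuous.comp
      ((hT'.comp (hargc t)).prodMk (hgc.neg.smul continuous_const))
  have hFint0 : Integrable (F 0) := by
    apply (hFcont 0).integrable_of_hasCompactSupport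
    apply HasCompactSupport.intro (isCompact_closedBall (0:E2) S)
    intro x hx
    have hx' : S < ‖x‖ := by simpa [mem_closedBall, dist_zero_right, not_le] using hx
    have h0 := hout 0 (by norm_num) x hx'
    simp only [hF]
    rw [image_eq_zero_of_notMem_tsupport h0]
    simp
  set bound : E2 → ℝ := (closedBall (0:E2) S).indicator (fun _ => C * (2 * ‖l‖)) with hbd
  have hCnn : 0 ≤ C := le_trans (norm_nonneg _) (hC 0)
  have h_bound : ∀ x : E2, ∀ t ∈ ball (0:ℝ) 1, ‖F' t x‖ ≤ bound x := by
    intro x t ht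
    by_cases hx : x ∈ closedBall (0:E2) S
    · rw [hbd, Set.indicator_of_mem hx]
      have hnorm : ‖F' t x‖
          = ‖(fderiv ℝ T (x - gradient φ x - (t * g x) • l)) ((-(g x)) • l)‖ := by
        simp [hF', norm_mul, henorm, Complex.norm_real]
      rw [hnorm]
      calc ‖(fderiv ℝ T (x - gradient φ x - (t * g x) • l)) ((-(g x)) • l)‖
          ≤ ‖fderiv ℝ T (x - gradient φ x - (t * g x) • l)‖ * ‖(-(g x)) • l‖ :=
            ContinuousLinearMap.le_opNorm _ _
        _ ≤ C * (2 * ‖l‖) := by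
            apply mul_le_mul (hC _) ?_ (norm_nonneg _) hCnn
            rw [norm_smul, Real.norm_eq_abs, abs_neg]
            exact mul_le_mul_of_nonneg_right (hg2 x) (norm_nonneg _)
    · rw [hbd, Set.indicator_of_notMem hx]
      have hx' : S < ‖x‖ := by simpa [mem_closedBall, dist_zero_right, not_le] using hx
      have ht1 : |t| ≤ 1 := le_of_lt (by simpa [mem_ball, Real.dist_eq] using ht)
      have h0 : fderiv ℝ T (x - gradient φ x - (t * g x) • l) = 0 :=
        fderiv_of_notMem_tsupport _ (hout t ht1 x hx')
      simp [hF', h0]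
  have hbound_int : Integrable bound := by
    rw [hbd, integrable_indicator_iff measurableSet_closedBall]
    exact integrableOn_const measure_closedBall_lt_top.ne
  have h_diff : ∀ x : E2, ∀ t : ℝ, HasDerivAt (fun s => F s x) (F' t x) t := by
    intro x t
    have hmap : (fun s : ℝ => x - gradient φ x - (s * g x) • l)
        = fun s : ℝ => (x - gradient φ x) + s • ((-(g x)) • l) := by
      funext s
      rw [smul_smul, mul_neg, neg_smul, ← sub_eq_add_neg]
    have hin : HasDerivAt (fun s : ℝ => x - gradient φ x - (s * g x) • l)
        ((-(g x)) • l) t := by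
      rw [hmap]
      have h1 : HasDerivAt (fun s : ℝ => s • ((-(g x)) • l)) ((-(g x)) • l) t := by
        simpa using (hasDerivAt_id t).smul_const ((-(g x)) • l)
      exact h1.const_add (x - gradient φ x)
    have hTd : HasFDerivAt T (fderiv ℝ T (x - gradient φ x - (t * g x) • l))
        (x - gradient φ x - (t * g x) • l) :=
      ((hT.differentiable one_ne_zero) _).hasFDerivAt
    have h3 := hTd.comp_hasDerivAt t hin
    have h4 := Complex.ofRealCLM.hasFDerivAt.comp_hasDerivAt t h3
    have h5 := h4.const_mul (e x)
    simpa [hF, hF', Function.comp] using h5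
  have main := hasDerivAt_integral_of_dominated_loc_of_deriv_le
    (F := F) (F' := F') (bound := bound) (ball_mem_nhds 0 one_pos)
    (Filter.Eventually.of_forall fun t => (hFcont t).aestronglyMeasurable)
    hFint0 ((hF'cont 0).aestronglyMeasurable)
    (Filter.Eventually.of_forall h_bound) hbound_int
    (Filter.Eventually.of_forall fun x => fun t _ => h_diff x t)
  have hfin := main.2
  have hval : ∀ x : E2, F' 0 x
      = e x * (((-(g x) * (fderiv ℝ T (x - gradient φ x) l) : ℝ) : ℂ)) := by
    intro x
    simp only [hF', zero_mul, zero_smul, sub_zero, neg_smul, ContinuousLinearMap.map_neg,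
      ContinuousLinearMap.map_smul, smul_eq_mul, neg_mul, Complex.ofReal_neg,
      Complex.ofReal_mul]
  have heq2 : (∫ x : E2, e x *
        (((-(g x) * (fderiv ℝ T (x - gradient φ x) l) : ℝ) : ℂ)))
      = ∫ a : E2, F' 0 a :=
    integral_congr_ae (Filter.Eventually.of_forall fun x => (hval x).symm)
  constructor
  · exact main.1.congr (Filter.Eventually.of_forall hval)
  · rw [heq2]
    exact hfin

lemma fderiv_sum_repr (f' : E2 →L[ℝ] ℝ) (l : E2) :
    f' l = ∑ q : Fin 2, l q * f' (EuclideanSpace.single q 1) := by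
  have hl : l = ∑ q : Fin 2, l q • EuclideanSpace.single q 1 := by
    have := (EuclideanSpace.basisFun (Fin 2) ℝ).sum_repr l
    simp only [EuclideanSpace.basisFun_apply, EuclideanSpace.basisFun_repr] at this
    exact this.symm
  conv_lhs => rw [hl]
  rw [map_sum]
  congr 1
  funext q
  rw [ContinuousLinearMap.map_smul, smul_eq_mul]

lemma integrable_D (T : E2 → ℝ) (hT : ContDiff ℝ 1 T) (hTc : HasCompactSupport T)
    (φ : E2 → ℝ) (hφ : ContDiff ℝ 2 φ) (Mφ : ℝ) (hbφ : ∀ x, ‖gradient φ x‖ ≤ Mφ)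
    (k' v : E2) :
    Integrable (fun x : E2 => Complex.exp (-(Complex.I * (⟪x,k'⟫:ℂ))) *
      ((fderiv ℝ T (x - gradient φ x) v : ℝ) : ℂ)) := by
  have hMφ : 0 ≤ Mφ := le_trans (norm_nonneg _) (hbφ 0)
  have hgrad : Continuous (gradient φ) :=
    (InnerProductSpace.toDual ℝ E2).symm.continuous.comp (hφ.continuous_fderiv two_ne_zero)
  have hp : Continuous (fun x : E2 => x - gradient φ x) := continuous_id.sub hgrad
  have hT' : Continuous (fderiv ℝ T) := hT.continuous_fderiv one_ne_zero
  obtain ⟨R, hR⟩ := hTc.isBounded.subset_closedBall (0 : E2)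
  have hecont : Continuous fun x : E2 => Complex.exp (-(Complex.I * (⟪x,k'⟫:ℂ))) := by
    apply Complex.continuous_exp.comp
    exact (continuous_const.mul (Complex.continuous_ofReal.comp
      (continuous_id.inner continuous_const))).neg
  have hcont : Continuous (fun x : E2 => Complex.exp (-(Complex.I * (⟪x,k'⟫:ℂ))) *
      ((fderiv ℝ T (x - gradient φ x) v : ℝ) : ℂ)) := by
    apply hecont.mul
    apply Complex.continuous_ofReal.comp
    exact isBoundedBilinearMap_apply.continuous.comp
      ((hT'.comp hp).prodMk continuous_const)
  apply hcont.integrable_of_hasCompactSupport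
  apply HasCompactSupport.intro (isCompact_closedBall (0:E2) (max R 0 + Mφ))
  intro x hx
  have hx' : max R 0 + Mφ < ‖x‖ := by
    simpa [mem_closedBall, dist_zero_right, not_le] using hx
  have hnot : (x - gradient φ x) ∉ tsupport T := by
    intro hmem
    have h1 : ‖x - gradient φ x‖ ≤ max R 0 :=
      le_trans (mem_closedBall_zero_iff.1 (hR hmem)) (le_max_left _ _)
    have h2 : ‖x‖ ≤ ‖x - gradient φ x‖ + Mφ := by
      calc ‖x‖ = ‖(x - gradient φ x) + gradient φ x‖ := by congr 1; abel
        _ ≤ ‖x - gradient φ x‖ + ‖gradient φ x‖ := norm_add_le _ _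
        _ ≤ ‖x - gradient φ x‖ + Mφ := by gcongr; exact hbφ x
    linarith
  have h0 : fderiv ℝ T (x - gradient φ x) = 0 := fderiv_of_notMem_tsupport _ hnot
  simp [h0]

/-- Lemma "partialconj", first equation: the Wirtinger-type derivative
`(∂/∂(re z) + i ∂/∂(im z)) G` at `z = 0` equals `2 ∑_q i l_q Â^q(k+l)`. -/
theorem stmt7 (T : E2 → ℝ) (hT : ContDiff ℝ 1 T) (hTc : HasCompactSupport T)
    (φ : E2 → ℝ) (hφ : ContDiff ℝ 2 φ)
    (Mφ : ℝ) (hbφ : ∀ x, ‖gradient φ x‖ ≤ Mφ)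
    (k l : E2) :
    deriv (fun t : ℝ => Gfun T φ k l (t : ℂ)) 0 +
        Complex.I * deriv (fun t : ℝ => Gfun T φ k l ((t : ℂ) * Complex.I)) 0
      = 2 * ∑ q : Fin 2, Complex.I * ((l q : ℝ) : ℂ) * ftR (Aq T φ q) (k + l) := by
  -- abbreviations
  set D : E2 → ℝ := fun x => fderiv ℝ T (x - gradient φ x) l with hD
  have hg1c : Continuous fun x : E2 => -2 * Real.sin ⟪x,l⟫ :=
    continuous_const.mul (Real.continuous_sin.comp (continuous_id.inner continuous_const))
  have hg2c : Continuous fun x : E2 => -2 * Real.cos ⟪x,l⟫ :=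
    continuous_const.mul (Real.continuous_cos.comp (continuous_id.inner continuous_const))
  have hg1b : ∀ x : E2, |(-2 : ℝ) * Real.sin ⟪x,l⟫| ≤ 2 := by
    intro x
    rw [abs_mul, abs_neg, abs_two]
    have h := abs_le.2 ⟨Real.neg_one_le_sin ⟪x,l⟫, Real.sin_le_one ⟪x,l⟫⟩
    linarith [abs_nonneg (Real.sin ⟪x,l⟫)]
  have hg2b : ∀ x : E2, |(-2 : ℝ) * Real.cos ⟪x,l⟫| ≤ 2 := by
    intro x
    rw [abs_mul, abs_neg, abs_two]
    have h := abs_le.2 ⟨Real.neg_one_le_cos ⟪x,l⟫, Real.cos_le_one ⟪x,l⟫⟩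
    linarith [abs_nonneg (Real.cos ⟪x,l⟫)]
  have key1 := key_deriv T hT hTc φ hφ Mφ hbφ k l
    (fun x => -2 * Real.sin ⟪x,l⟫) hg1c hg1b
  have key2 := key_deriv T hT hTc φ hφ Mφ hbφ k l
    (fun x => -2 * Real.cos ⟪x,l⟫) hg2c hg2b
  -- rewrite Gfun along the two paths
  have hGre : (fun t : ℝ => Gfun T φ k l ((t : ℂ))) = fun t : ℝ =>
      (2 * Real.pi)⁻¹ • ∫ x : E2, Complex.exp (-(Complex.I * (⟪x,k⟫:ℂ))) *
        ((T (x - gradient φ x - (t * (-2 * Real.sin ⟪x,l⟫)) • l) : ℝ) : ℂ) := by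
    funext t
    unfold Gfun
    congr 1
    refine integral_congr_ae (Filter.Eventually.of_forall fun x => ?_)
    beta_reduce
    rw [gradient_pert_re]
  have hGim : (fun t : ℝ => Gfun T φ k l ((t : ℂ) * Complex.I)) = fun t : ℝ =>
      (2 * Real.pi)⁻¹ • ∫ x : E2, Complex.exp (-(Complex.I * (⟪x,k⟫:ℂ))) *
        ((T (x - gradient φ x - (t * (-2 * Real.cos ⟪x,l⟫)) • l) : ℝ) : ℂ) := by
    funext t
    unfold Gfun
    congr 1
    refine integral_congr_ae (Filter.Eventually.of_forall fun x => ?_)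
    beta_reduce
    rw [gradient_pert_im]
  have hd1 : HasDerivAt (fun t : ℝ => Gfun T φ k l ((t : ℂ)))
      ((2 * Real.pi)⁻¹ • ∫ x : E2, Complex.exp (-(Complex.I * (⟪x,k⟫:ℂ))) *
        (((-(-2 * Real.sin ⟪x,l⟫) * (fderiv ℝ T (x - gradient φ x) l) : ℝ) : ℂ))) 0 := by
    rw [hGre]
    exact key1.2.const_smul ((2 * Real.pi)⁻¹ : ℝ)
  have hd2 : HasDerivAt (fun t : ℝ => Gfun T φ k l ((t : ℂ) * Complex.I))
      ((2 * Real.pi)⁻¹ • ∫ x : E2, Complex.exp (-(Complex.I * (⟪x,k⟫:ℂ))) *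
        (((-(-2 * Real.cos ⟪x,l⟫) * (fderiv ℝ T (x - gradient φ x) l) : ℝ) : ℂ))) 0 := by
    rw [hGim]
    exact key2.2.const_smul ((2 * Real.pi)⁻¹ : ℝ)
  rw [hd1.deriv, hd2.deriv]
  -- clean up the integrands
  have e1 : (∫ x : E2, Complex.exp (-(Complex.I * (⟪x,k⟫:ℂ))) *
        (((-(-2 * Real.sin ⟪x,l⟫) * (fderiv ℝ T (x - gradient φ x) l) : ℝ) : ℂ)))
      = ∫ x : E2, Complex.exp (-(Complex.I * (⟪x,k⟫:ℂ))) *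
        ((2 * Real.sin ⟪x,l⟫ * D x : ℝ) : ℂ) := by
    refine integral_congr_ae (Filter.Eventually.of_forall fun x => ?_)
    congr 1
    push_cast
    ring
  have e2 : (∫ x : E2, Complex.exp (-(Complex.I * (⟪x,k⟫:ℂ))) *
        (((-(-2 * Real.cos ⟪x,l⟫) * (fderiv ℝ T (x - gradient φ x) l) : ℝ) : ℂ)))
      = ∫ x : E2, Complex.exp (-(Complex.I * (⟪x,k⟫:ℂ))) *
        ((2 * Real.cos ⟪x,l⟫ * D x : ℝ) : ℂ) := by
    refine integral_congr_ae (Filter.Eventually.of_forall fun x => ?_)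
    congr 1
    push_cast
    ring
  rw [e1, e2]
  -- integrability facts
  have hInt1 : Integrable (fun x : E2 => Complex.exp (-(Complex.I * (⟪x,k⟫:ℂ))) *
      ((2 * Real.sin ⟪x,l⟫ * D x : ℝ) : ℂ)) := by
    refine key1.1.congr (Filter.Eventually.of_forall fun x => ?_)
    congr 1
    push_cast
    ring
  have hInt2 : Integrable (fun x : E2 => Complex.exp (-(Complex.I * (⟪x,k⟫:ℂ))) *
      ((2 * Real.cos ⟪x,l⟫ * D x : ℝ) : ℂ)) := by
    refine key2.1.congr (Filter.Eventually.of_forall fun x => ?_)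
    congr 1
    push_cast
    ring
  have hIntD : Integrable (fun x : E2 => Complex.exp (-(Complex.I * (⟪x,k+l⟫:ℂ))) *
      ((D x : ℝ) : ℂ)) := integrable_D T hT hTc φ hφ Mφ hbφ (k+l) l
  have hIntq : ∀ q : Fin 2, Integrable (fun x : E2 =>
      Complex.exp (-(Complex.I * (⟪x,k+l⟫:ℂ))) * ((Aq T φ q x : ℝ) : ℂ)) := fun q =>
    integrable_D T hT hTc φ hφ Mφ hbφ (k+l) (EuclideanSpace.single q 1)
  -- combine the two integrals on the left
  have hLHS : (2 * Real.pi)⁻¹ • (∫ x : E2, Complex.exp (-(Complex.I * (⟪x,k⟫:ℂ))) *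
        ((2 * Real.sin ⟪x,l⟫ * D x : ℝ) : ℂ)) +
      Complex.I * ((2 * Real.pi)⁻¹ • (∫ x : E2, Complex.exp (-(Complex.I * (⟪x,k⟫:ℂ))) *
        ((2 * Real.cos ⟪x,l⟫ * D x : ℝ) : ℂ)))
      = (2 * Real.pi)⁻¹ • (2 * Complex.I *
          ∫ x : E2, Complex.exp (-(Complex.I * (⟪x,k+l⟫:ℂ))) * ((D x : ℝ) : ℂ)) := by
    rw [mul_smul_comm, ← smul_add]
    congr 1
    rw [show Complex.I * (∫ x : E2, Complex.exp (-(Complex.I * (⟪x,k⟫:ℂ))) *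
          ((2 * Real.cos ⟪x,l⟫ * D x : ℝ) : ℂ))
        = ∫ x : E2, Complex.I * (Complex.exp (-(Complex.I * (⟪x,k⟫:ℂ))) *
          ((2 * Real.cos ⟪x,l⟫ * D x : ℝ) : ℂ)) from (integral_const_mul _ _).symm]
    rw [← integral_add hInt1 (hInt2.const_mul Complex.I), ← integral_const_mul]
    refine integral_congr_ae (Filter.Eventually.of_forall fun x => ?_)
    beta_reduce
    have hsplit : ((⟪x, k + l⟫ : ℝ) : ℂ) = ((⟪x,k⟫:ℝ):ℂ) + ((⟪x,l⟫:ℝ):ℂ) := by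
      rw [← Complex.ofReal_add, inner_add_right]
    rw [hsplit]
    have hexp : Complex.exp (-(Complex.I * (((⟪x,k⟫:ℝ):ℂ) + ((⟪x,l⟫:ℝ):ℂ))))
        = Complex.exp (-(Complex.I * ((⟪x,k⟫:ℝ):ℂ))) *
          Complex.exp (-(Complex.I * ((⟪x,l⟫:ℝ):ℂ))) := by
      rw [← Complex.exp_add]
      ring_nf
    rw [hexp]
    have hexpl : Complex.exp (-(Complex.I * ((⟪x,l⟫:ℝ):ℂ)))
        = ((Real.cos ⟪x,l⟫ : ℝ) : ℂ) - ((Real.sin ⟪x,l⟫ : ℝ) : ℂ) * Complex.I := by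
      rw [show -(Complex.I * ((⟪x,l⟫:ℝ):ℂ)) = ((-⟪x,l⟫ : ℝ):ℂ) * Complex.I by
        push_cast; ring]
      rw [Complex.exp_mul_I]
      push_cast
      rw [Complex.cos_neg, Complex.sin_neg, ← Complex.ofReal_cos, ← Complex.ofReal_sin]
      push_cast
      ring
    rw [hexpl]
    push_cast
    linear_combination (2 * Complex.exp (-(Complex.I * ((⟪x,k⟫:ℝ):ℂ))) *
      Complex.sin ((⟪x,l⟫ : ℝ) : ℂ) * ((D x : ℝ) : ℂ)) * Complex.I_mul_I
  rw [hLHS]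
  -- now the right-hand side
  have hftR : ∀ q : Fin 2, ftR (Aq T φ q) (k+l)
      = (2 * Real.pi)⁻¹ • ∫ x : E2, Complex.exp (-(Complex.I * (⟪x,k+l⟫:ℂ))) *
          ((Aq T φ q x : ℝ) : ℂ) := fun q => rfl
  have hterm : ∀ q : Fin 2, Complex.I * ((l q : ℝ) : ℂ) * ftR (Aq T φ q) (k+l)
      = (2 * Real.pi)⁻¹ • ∫ x : E2, Complex.I * ((l q : ℝ) : ℂ) *
          (Complex.exp (-(Complex.I * (⟪x,k+l⟫:ℂ))) * ((Aq T φ q x : ℝ) : ℂ)) := by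
    intro q
    rw [hftR q, mul_smul_comm, integral_const_mul]
  rw [Finset.sum_congr rfl (fun q _ => hterm q), ← Finset.smul_sum, mul_smul_comm]
  congr 1
  rw [← integral_finset_sum _ (fun q _ => ((hIntq q).const_mul _)),
    show (2 * Complex.I * ∫ x : E2, Complex.exp (-(Complex.I * (⟪x,k+l⟫:ℂ))) *
        ((D x : ℝ) : ℂ))
      = ∫ x : E2, 2 * Complex.I * (Complex.exp (-(Complex.I * (⟪x,k+l⟫:ℂ))) *
        ((D x : ℝ) : ℂ)) from (integral_const_mul _ _).symm,
    show (2 : ℂ) * ∫ x : E2, ∑ q : Fin 2, Complex.I * ((l q : ℝ) : ℂ) *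
        (Complex.exp (-(Complex.I * (⟪x,k+l⟫:ℂ))) * ((Aq T φ q x : ℝ) : ℂ))
      = ∫ x : E2, 2 * ∑ q : Fin 2, Complex.I * ((l q : ℝ) : ℂ) *
        (Complex.exp (-(Complex.I * (⟪x,k+l⟫:ℂ))) * ((Aq T φ q x : ℝ) : ℂ)) from
      (integral_const_mul _ _).symm]
  refine integral_congr_ae (Filter.Eventually.of_forall fun x => ?_)
  beta_reduce
  have hDsum : ((D x : ℝ) : ℂ) = ∑ q : Fin 2, ((l q : ℝ) : ℂ) * ((Aq T φ q x : ℝ) : ℂ) := by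
    rw [hD]
    push_cast [fderiv_sum_repr (fderiv ℝ T (x - gradient φ x)) l]
    rfl
  rw [hDsum, Finset.mul_sum, Finset.mul_sum, Finset.mul_sum]
  exact Finset.sum_congr rfl fun q _ => by ring
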